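/- arXiv:1110.3200 — 2 statements merged into one kernel-verified Lean document; each statement's English description precedes it below -/
import Mathlib

section
/- Let G be a linearly ordered abelian group, n ∈ ℕ, and C ⊆ G a convex subgroup. Then ⋂{H + nG : H a convex subgroup of G with H ⊋ C} = ⋂{H_{n,a} + nG : a ∈ G, H_{n,a} ⊋ C}, where intersections over empty families are G. In other words, G^{[n]}_C = ⋂{H_{n,a} + nG : a ∈ G, H_{n,a} ⊋ C}. -/
open Pointwise

/-- The set `nG = {n·g : g ∈ G}`. -/
def NG (G : Type*) [AddCommGroup G] (n : ℕ) : Set G :=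
  {x : G | ∃ g : G, n • g = x}

/-- `H` is a convex subgroup of the linearly ordered abelian group `G`. -/
def IsConvexSubgroup {G : Type*} [AddCommGroup G] [LinearOrder G] [IsOrderedAddMonoid G] (H : Set G) : Prop :=
  (0 : G) ∈ H ∧ (∀ x ∈ H, ∀ y ∈ H, x + y ∈ H) ∧ (∀ x ∈ H, -x ∈ H) ∧
    ∀ a ∈ H, ∀ b : G, 0 ≤ b → b ≤ a → b ∈ H

/-- `H_{n,a}`: the largest convex subgroup `H` with `a ∉ H + nG` (it is the union of
all such subgroups), and `{0}` if `a ∈ nG` (in which case the union is empty). -/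
def Hna {G : Type*} [AddCommGroup G] [LinearOrder G] [IsOrderedAddMonoid G] (n : ℕ) (a : G) : Set G :=
  {0} ∪ ⋃₀ {H : Set G | IsConvexSubgroup H ∧ a ∉ H + NG G n}

/-- `H'_{n,b} = ⋃ {H_{n,a} : a ∈ G, b ∉ H_{n,a}}`, with `{0}` for the empty union. -/
def Hnb' {G : Type*} [AddCommGroup G] [LinearOrder G] [IsOrderedAddMonoid G] (n : ℕ) (b : G) : Set G :=
  {0} ∪ ⋃₀ {H : Set G | ∃ a : G, H = Hna n a ∧ b ∉ Hna n a}

/-- `G^{[n]}_C = ⋂ {H + nG : H convex subgroup, H ⊋ C}`, with `G` for the empty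
intersection. -/
def Gbr {G : Type*} [AddCommGroup G] [LinearOrder G] [IsOrderedAddMonoid G] (C : Set G) (n : ℕ) : Set G :=
  ⋂₀ {S : Set G | ∃ H : Set G, IsConvexSubgroup H ∧ C ⊂ H ∧ S = H + NG G n}


lemma convex_comparable {G : Type*} [AddCommGroup G] [LinearOrder G] [IsOrderedAddMonoid G] {H K : Set G}
    (hH : IsConvexSubgroup H) (hK : IsConvexSubgroup K) : H ⊆ K ∨ K ⊆ H := by
  by_cases hHK : H ⊆ K
  · exact Or.inl hHK
  · right
    obtain ⟨h, hhH, hhK⟩ := Set.not_subset.mp hHK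
    intro k hk
    have habs : |h| ∈ H := by
      rcases abs_choice h with e | e
      · rw [e]; exact hhH
      · rw [e]; exact hH.2.2.1 h hhH
    have kabs : |k| ∈ K := by
      rcases abs_choice k with e | e
      · rw [e]; exact hk
      · rw [e]; exact hK.2.2.1 k hk
    rcases le_total (|k|) (|h|) with hle | hle
    · have : |k| ∈ H := hH.2.2.2 _ habs _ (abs_nonneg k) hle
      rcases abs_choice k with e | e
      · rwa [e] at this
      · have := hH.2.2.1 _ this
        rwa [e, neg_neg] at this
    · exfalso
      have : |h| ∈ K := hK.2.2.2 _ kabs _ (abs_nonneg h) hle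
      rcases abs_choice h with e | e
      · exact hhK (e ▸ this)
      · have := hK.2.2.1 _ this
        rw [e, neg_neg] at this
        exact hhK this

lemma Hna_isConvexSubgroup {G : Type*} [AddCommGroup G] [LinearOrder G] [IsOrderedAddMonoid G] (n : ℕ) (a : G) :
    IsConvexSubgroup (Hna n a) := by
  refine ⟨Or.inl rfl, ?_, ?_, ?_⟩
  · rintro x (hx | ⟨H1, hH1, hx⟩) y hy
    · rw [Set.mem_singleton_iff] at hx
      rw [hx, zero_add]; exact hy
    rcases hy with hy | ⟨H2, hH2, hy⟩
    · rw [Set.mem_singleton_iff] at hy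
      rw [hy, add_zero]; exact Or.inr ⟨H1, hH1, hx⟩
    · rcases convex_comparable hH1.1 hH2.1 with hs | hs
      · exact Or.inr ⟨H2, hH2, hH2.1.2.1 _ (hs hx) _ hy⟩
      · exact Or.inr ⟨H1, hH1, hH1.1.2.1 _ hx _ (hs hy)⟩
  · rintro x (hx | ⟨H1, hH1, hx⟩)
    · rw [Set.mem_singleton_iff] at hx
      rw [hx, neg_zero]; exact Or.inl rfl
    · exact Or.inr ⟨H1, hH1, hH1.1.2.2.1 _ hx⟩
  · rintro c (hc | ⟨H1, hH1, hc⟩) b hb0 hbc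
    · rw [Set.mem_singleton_iff] at hc
      subst hc
      exact Or.inl (le_antisymm hbc hb0)
    · exact Or.inr ⟨H1, hH1, hH1.1.2.2.2 _ hc _ hb0 hbc⟩

/-- For a convex subgroup `C` and positive `n`:
`G^{[n]}_C = ⋂ {H_{n,a} + nG : a ∈ G, H_{n,a} ⊋ C}`, where intersections over empty
families are all of `G` (`Set.univ`). -/
theorem Gbr_eq_sInter_Hna_add {G : Type*} [AddCommGroup G] [LinearOrder G] [IsOrderedAddMonoid G]
    (n : ℕ) (hn : 0 < n) (C : Set G) (hC : IsConvexSubgroup C) :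
    Gbr C n = ⋂₀ {S : Set G | ∃ a : G, C ⊂ Hna n a ∧ S = Hna n a + NG G n} := by
  ext x
  simp only [Gbr, Set.mem_sInter, Set.mem_setOf_eq]
  constructor
  · rintro hx S ⟨a, hCa, rfl⟩
    exact hx _ ⟨Hna n a, Hna_isConvexSubgroup n a, hCa, rfl⟩
  · rintro hx S ⟨H, hH, hCH, rfl⟩
    by_contra hxH
    have hsub : H ⊆ Hna n x := fun h hh => Or.inr ⟨H, ⟨hH, hxH⟩, hh⟩
    have hCx : C ⊂ Hna n x := hCH.trans_subset hsub
    have hmem : x ∈ Hna n x + NG G n := hx _ ⟨x, hCx, rfl⟩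
    obtain ⟨h, hh, g, hg, hsum⟩ := Set.mem_add.mp hmem
    rcases hh with hh | ⟨H', hH', hh⟩
    · rw [Set.mem_singleton_iff] at hh
      subst hh
      exact hxH (Set.mem_add.mpr ⟨0, hH.1, g, hg, hsum⟩)
    · exact hH'.2 (Set.mem_add.mpr ⟨h, hh, g, hg, hsum⟩)
end

section
/- Let G be a linearly ordered abelian group and H ⊆ G a convex subgroup such that the quotient G/H is discrete, i.e., there exists e ∈ G with e > 0, e ∉ H, and such that for every b ∈ G with b > 0 and b ∉ H, either b − e ∈ H or e < b. Then for every n ∈ ℕ with n ≥ 2, any such e satisfies H = H_{n,e} and H = H'_{n,e}; in particular, for every n ≥ 2 there exists a ∈ G with H = H_{n,a}, and there exists a ∈ G with H = H'_{n,a}. -/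
open Pointwise

section Aux

variable {G : Type*} [AddCommGroup G] [LinearOrder G] [IsOrderedAddMonoid G]

lemma aux_abs_mem {H : Set G} (hH : IsConvexSubgroup H) {x : G} (hx : x ∈ H) : |x| ∈ H := by
  rcases abs_choice x with h | h <;> rw [h]
  · exact hx
  · exact hH.2.2.1 x hx

lemma aux_of_abs_mem {H : Set G} (hH : IsConvexSubgroup H) {x : G} (hx : |x| ∈ H) : x ∈ H := by
  rcases abs_choice x with h | h
  · rwa [h] at hx
  · rw [h] at hx
    simpa using hH.2.2.1 _ hx

lemma aux_nsmul {H : Set G} (hH : IsConvexSubgroup H) {x : G} (hx : x ∈ H) (m : ℕ) :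
    m • x ∈ H := by
  induction m with
  | zero => simpa using hH.1
  | succ k ih => rw [succ_nsmul]; exact hH.2.1 _ ih _ hx

lemma aux_chain {H K : Set G} (hH : IsConvexSubgroup H) (hK : IsConvexSubgroup K) :
    K ⊆ H ∨ H ⊆ K := by
  by_contra hc
  push_neg at hc
  obtain ⟨k, hk, hkH⟩ := Set.not_subset.mp hc.1
  obtain ⟨a, ha, haK⟩ := Set.not_subset.mp hc.2
  have hkK : |k| ∈ K := aux_abs_mem hK hk
  have haH : |a| ∈ H := aux_abs_mem hH ha
  rcases le_total |k| |a| with h | h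
  · exact hkH (aux_of_abs_mem hH (hH.2.2.2 _ haH _ (abs_nonneg k) h))
  · exact haK (aux_of_abs_mem hK (hK.2.2.2 _ hkK _ (abs_nonneg a) h))

lemma aux_mem_add_self {K : Set G} {x : G} (hx : x ∈ K) (n : ℕ) : x ∈ K + NG G n :=
  Set.mem_add.mpr ⟨x, hx, 0, ⟨0, by simp⟩, by simp⟩

end Aux

/-- Let `H` be a convex subgroup such that `G/H` is discrete, with
`e` a preimage of the minimal positive element of `G/H` (i.e. `e > 0`, `e ∉ H`, and
every positive `b ∉ H` satisfies `b - e ∈ H` or `e < b`). Then for every `n ≥ 2` one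
has `H = H_{n,e}` and `H = H'_{n,e}`; in particular `H` is of the form `H_{n,a}` and
of the form `H'_{n,a}` for some `a ∈ G`. -/


theorem discrete_quotient_eq_Hna_and_Hnb' {G : Type*} [AddCommGroup G] [LinearOrder G] [IsOrderedAddMonoid G]
    (H : Set G) (hH : IsConvexSubgroup H) (e : G)
    (he1 : 0 < e) (he2 : e ∉ H)
    (he3 : ∀ b : G, 0 < b → b ∉ H → (b - e ∈ H ∨ e < b))
    (n : ℕ) (hn : 2 ≤ n) :
    H = Hna n e ∧ H = Hnb' n e ∧
    (∃ a : G, H = Hna n a) ∧ (∃ a : G, H = Hnb' n a) := by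
  -- Key fact: `e ∉ H + nG`.
  have key1 : e ∉ H + NG G n := by
    intro hmem
    rw [Set.mem_add] at hmem
    obtain ⟨h, hh, y, ⟨g, hg⟩, hsum⟩ := hmem
    subst hg
    have hng : n • g = e - h := by rw [← hsum]; abel
    have hgH : g ∉ H := by
      intro hg'
      exact he2 (hsum ▸ hH.2.1 _ hh _ (aux_nsmul hH hg' n))
    have hpos : 0 < n • g := by
      by_contra hle
      push_neg at hle
      rw [hng, sub_nonpos] at hle
      exact he2 (hH.2.2.2 _ hh _ he1.le hle)
    have hgpos : 0 < g := by
      by_contra hle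
      push_neg at hle
      exact absurd (nsmul_nonpos hle n) (not_le.mpr hpos)
    have h2n : 2 • e ≤ n • e := nsmul_le_nsmul_left he1.le hn
    rcases he3 g hgpos hgH with hcase | hcase
    · -- `g - e ∈ H`
      have h1 : n • (g - e) ∈ H := aux_nsmul hH hcase n
      have heq : e - n • e = n • (g - e) + h := by
        rw [smul_sub, hng]; abel
      have h2 : e - n • e ∈ H := heq ▸ hH.2.1 _ h1 _ hh
      have h3 : n • e - e ∈ H := by simpa using hH.2.2.1 _ h2
      have h4 : e ≤ n • e - e := by
        rw [two_nsmul] at h2n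
        exact le_sub_iff_add_le.mpr (by simpa [add_comm] using h2n)
      exact he2 (hH.2.2.2 _ h3 _ he1.le h4)
    · -- `e < g`
      have h2g : 2 • g ≤ n • g := nsmul_le_nsmul_left hgpos.le hn
      rw [two_nsmul] at h2g
      have hw1 : 0 < n • g - g := by
        have : g + g ≤ n • g := h2g
        have : g ≤ n • g - g := le_sub_iff_add_le.mpr (by simpa [add_comm] using this)
        exact lt_of_lt_of_le hgpos this
      have hw2 : n • g - g ≤ -h := by
        rw [hng]
        have : e - g ≤ 0 := sub_nonpos.mpr hcase.le
        calc e - h - g = (e - g) + -h := by abel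
          _ ≤ 0 + -h := add_le_add_left this _
          _ = -h := by simp
      have hmh : -h ∈ H := hH.2.2.1 _ hh
      have hwH : n • g - g ∈ H := hH.2.2.2 _ hmh _ hw1.le hw2
      have hgle : g ≤ n • g - g := le_sub_iff_add_le.mpr (by simpa [add_comm] using h2g)
      exact hgH (hH.2.2.2 _ hwH _ hgpos.le hgle)
  -- `H ⊆ Hna n e`
  have hsub1 : H ⊆ Hna n e := by
    intro x hx
    exact Set.mem_union_right _ (Set.mem_sUnion.mpr ⟨H, ⟨hH, key1⟩, hx⟩)
  -- a convex subgroup not containing `e`, but comparable with and not contained in `H`,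
  -- must contain `e`: helper
  have key2 : ∀ K : Set G, IsConvexSubgroup K → H ⊆ K → ∀ x ∈ K, x ∉ H → e ∈ K := by
    intro K hK hHK x hxK hxH
    have hx0 : x ≠ 0 := fun h0 => hxH (h0 ▸ hH.1)
    have hy : |x| ∈ K := aux_abs_mem hK hxK
    have hyH : |x| ∉ H := fun h => hxH (aux_of_abs_mem hH h)
    have hypos : 0 < |x| := abs_pos.mpr hx0
    rcases he3 _ hypos hyH with hc | hc
    · have h1 : |x| + -(|x| - e) ∈ K := hK.2.1 _ hy _ (hK.2.2.1 _ (hHK hc))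
      have heq : |x| + -(|x| - e) = e := by abel
      rwa [heq] at h1
    · exact hK.2.2.2 _ hy _ he1.le hc.le
  -- `Hna n e ⊆ H`
  have hsub2 : Hna n e ⊆ H := by
    intro x hx
    simp only [Hna, Set.mem_union, Set.mem_singleton_iff, Set.mem_sUnion,
      Set.mem_setOf_eq] at hx
    rcases hx with hx | ⟨K, ⟨hK, heK⟩, hxK⟩
    · exact hx ▸ hH.1
    · rcases aux_chain hH hK with h1 | h1
      · exact h1 hxK
      · by_contra hxH
        exact heK (aux_mem_add_self (key2 K hK h1 x hxK hxH) n)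
  have hEq : H = Hna n e := Set.Subset.antisymm hsub1 hsub2
  -- `H ⊆ Hnb' n e`
  have hsub3 : H ⊆ Hnb' n e := by
    intro x hx
    exact Set.mem_union_right _
      (Set.mem_sUnion.mpr ⟨Hna n e, ⟨e, rfl, hEq ▸ he2⟩, hEq ▸ hx⟩)
  -- `Hnb' n e ⊆ H`
  have hsub4 : Hnb' n e ⊆ H := by
    intro x hx
    simp only [Hnb', Set.mem_union, Set.mem_singleton_iff, Set.mem_sUnion,
      Set.mem_setOf_eq] at hx
    rcases hx with hx | ⟨S, ⟨a, hS, heS⟩, hxS⟩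
    · exact hx ▸ hH.1
    · subst hS
      simp only [Hna, Set.mem_union, Set.mem_singleton_iff, Set.mem_sUnion,
        Set.mem_setOf_eq] at hxS
      rcases hxS with hx0 | ⟨K, ⟨hK, haK⟩, hxK⟩
      · exact hx0 ▸ hH.1
      · have hKsub : K ⊆ Hna n a := fun y hy =>
          Set.mem_union_right _ (Set.mem_sUnion.mpr ⟨K, ⟨hK, haK⟩, hy⟩)
        rcases aux_chain hH hK with h1 | h1
        · exact h1 hxK
        · by_contra hxH
          exact heS (hKsub (key2 K hK h1 x hxK hxH))
  have hEq' : H = Hnb' n e := Set.Subset.antisymm hsub3 hsub4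
  exact ⟨hEq, hEq', ⟨e, hEq⟩, ⟨e, hEq'⟩⟩
end
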